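/- Let A be a connected graph with universal covering tree T = T_A and universal covering morphism π : T → A. Let γ, γ' be vertices of T and set q := π₀(γ), q' := π₀(γ'). Then for every isomorphism g₀ : A_q → A_{q'} of rooted graphs there exists a unique isomorphism g : T_γ → T_{γ'} of rooted trees such that π ∘ g = g₀ ∘ π on T_γ, i.e. π₀(g(v)) = g₀(π₀(v)) for every vertex v of T_γ and π₁(g(e)) = g₀(π₁(e)) for every edge e of T_γ. -/

import Mathlib

/-- A rooted directed multigraph. -/
structure RGraph where
  V : Type
  E : Type
  s : E → V
  t : E → V
  root : V

namespace RGraph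

/-- `l` is a path: consecutive edges are composable. -/
def IsPath (A : RGraph) (l : List A.E) : Prop :=
  l.Chain' (fun e f => A.t e = A.s f)

/-- `l` is a path starting at the vertex `q`. -/
def PathFrom (A : RGraph) (q : A.V) (l : List A.E) : Prop :=
  A.IsPath l ∧ ∀ e ∈ l.head?, A.s e = q

/-- The target of the path `l` started at `q` (equal to `q` for the empty path). -/
def pathTarget (A : RGraph) (q : A.V) (l : List A.E) : A.V :=
  l.foldl (fun _ e => A.t e) q

@[simp] lemma pathTarget_nil (A : RGraph) (q : A.V) : A.pathTarget q [] = q := rfl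

@[simp] lemma pathTarget_cons (A : RGraph) (q : A.V) (a : A.E) (l : List A.E) :
    A.pathTarget q (a :: l) = A.pathTarget (A.t a) l := rfl

lemma pathTarget_append (A : RGraph) (q : A.V) (l l' : List A.E) :
    A.pathTarget q (l ++ l') = A.pathTarget (A.pathTarget q l) l' := by
  simp [pathTarget]

@[simp] lemma pathTarget_append_single (A : RGraph) (q : A.V) (l : List A.E) (e : A.E) :
    A.pathTarget q (l ++ [e]) = A.t e := by
  rw [pathTarget_append]; rfl

lemma pathFrom_nil (A : RGraph) (q : A.V) : A.PathFrom q [] :=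
  ⟨List.isChain_nil, by simp⟩

lemma pathTarget_getLast {A : RGraph} {q : A.V} {l : List A.E} {x : A.E}
    (hx : x ∈ l.getLast?) : A.pathTarget q l = A.t x := by
  induction l generalizing q with
  | nil => simp at hx
  | cons a l ih =>
    cases l with
    | nil => simp at hx; subst hx; rfl
    | cons b l =>
      rw [List.getLast?_cons_cons] at hx
      simpa using ih (q := A.t a) hx

lemma pathFrom_append_single {A : RGraph} {q : A.V} {l : List A.E} {e : A.E}
    (h : A.PathFrom q l) (he : A.s e = A.pathTarget q l) :
    A.PathFrom q (l ++ [e]) := by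
  constructor
  · apply List.isChain_append.mpr
    refine ⟨h.1, List.isChain_singleton _, ?_⟩
    intro x hx y hy
    simp at hy
    subst hy
    rw [he]
    exact (pathTarget_getLast hx).symm
  · intro f hf
    cases l with
    | nil =>
      simp at hf
      subst hf
      simpa using he
    | cons a l =>
      simp at hf
      subst hf
      exact h.2 a (by simp)

/-- `w` is reachable from `q` by an oriented path. -/
def Reach (A : RGraph) (q w : A.V) : Prop :=
  ∃ l, A.PathFrom q l ∧ A.pathTarget q l = w

lemma reach_self (A : RGraph) (q : A.V) : A.Reach q q :=
  ⟨[], A.pathFrom_nil q, rfl⟩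

lemma reach_target {A : RGraph} {q : A.V} {e : A.E} (h : A.Reach q (A.s e)) :
    A.Reach q (A.t e) := by
  obtain ⟨l, hl, ht⟩ := h
  exact ⟨l ++ [e], pathFrom_append_single hl ht.symm, by simp⟩

/-- A graph is connected (as a rooted directed graph) if every vertex is reachable
from the root. -/
def Connected (A : RGraph) : Prop := ∀ w : A.V, A.Reach A.root w

/-- A graph is a tree if the target map from paths emanating from the root to
vertices is a bijection. -/
def IsTree (A : RGraph) : Prop :=
  Function.Bijective
    (fun l : {l : List A.E // A.PathFrom A.root l} => A.pathTarget A.root l.1)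

/-- A graph is locally finite if every vertex has finitely many outgoing edges. -/
def LocallyFinite (A : RGraph) : Prop := ∀ q : A.V, Finite {e : A.E // A.s e = q}

/-- Adjacency: there is an edge from `v` to `w`. -/
def Adj (A : RGraph) (v w : A.V) : Prop := ∃ e, A.s e = v ∧ A.t e = w

/-- The induced rooted subgraph on all vertices reachable from `q` (the "cone" at `q`). -/
def subgraph (A : RGraph) (q : A.V) : RGraph where
  V := {w // A.Reach q w}
  E := {e // A.Reach q (A.s e)}
  s := fun e => ⟨A.s e.1, e.2⟩
  t := fun e => ⟨A.t e.1, reach_target e.2⟩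
  root := ⟨q, A.reach_self q⟩

/-- The truncation of the cone at `v` to vertices at distance at most `d` from `v`. -/
def trunc (A : RGraph) (v : A.V) (d : ℕ) : RGraph where
  V := {w // ∃ l, A.PathFrom v l ∧ A.pathTarget v l = w ∧ l.length ≤ d}
  E := {e // ∃ l, A.PathFrom v l ∧ A.pathTarget v l = A.s e ∧ l.length < d}
  s := fun e => ⟨A.s e.1, e.2.imp fun _ h => ⟨h.1, h.2.1, h.2.2.le⟩⟩
  t := fun e => ⟨A.t e.1, by
    obtain ⟨l, h1, h2, h3⟩ := e.2
    exact ⟨l ++ [e.1], pathFrom_append_single h1 h2.symm, by simp,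
      by simp only [List.length_append, List.length_singleton]; omega⟩⟩
  root := ⟨v, [], A.pathFrom_nil v, rfl, Nat.zero_le d⟩

/-- The universal covering tree of `A`: vertices are the paths emanating from the root. -/
def cover (A : RGraph) : RGraph where
  V := {l : List A.E // A.PathFrom A.root l}
  E := {x : {l : List A.E // A.PathFrom A.root l} × A.E //
          A.s x.2 = A.pathTarget A.root x.1.1}
  s := fun x => x.1.1
  t := fun x => ⟨x.1.1.1 ++ [x.1.2], pathFrom_append_single x.1.1.2 x.2⟩
  root := ⟨[], A.pathFrom_nil _⟩

end RGraph

/-- A morphism of rooted directed multigraphs. -/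
structure GraphHom (A B : RGraph) where
  v : A.V → B.V
  e : A.E → B.E
  root_eq : v A.root = B.root
  s_eq : ∀ x, B.s (e x) = v (A.s x)
  t_eq : ∀ x, B.t (e x) = v (A.t x)

namespace GraphHom

variable {A B : RGraph}

/-- The unique path lifting property. -/
def UPLP (p : GraphHom A B) : Prop :=
  ∀ (q : A.V) (l' : List B.E), B.PathFrom (p.v q) l' →
    ∃! l : List A.E, A.PathFrom q l ∧ l.map p.e = l'

/-- A covering morphism: surjective on vertices, with the unique path lifting property. -/
def IsCovering (p : GraphHom A B) : Prop := Function.Surjective p.v ∧ p.UPLP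

/-- An isomorphism of graphs: bijective on vertices and on edges. -/
def IsIso (p : GraphHom A B) : Prop := Function.Bijective p.v ∧ Function.Bijective p.e

/-- The restriction of the edge map to the edges emanating from `q`. -/
def outMap (p : GraphHom A B) (q : A.V) :
    {e : A.E // A.s e = q} → {e' : B.E // B.s e' = p.v q} :=
  fun e => ⟨p.e e.1, by rw [p.s_eq, e.2]⟩

lemma isPath_map (p : GraphHom A B) {l : List A.E} (h : A.IsPath l) :
    B.IsPath (l.map p.e) := by
  rw [RGraph.IsPath]
  show List.IsChain _ (l.map p.e)
  rw [List.isChain_map]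
  exact List.IsChain.imp (fun a b hab => by rw [p.t_eq, p.s_eq, hab]) h

lemma pathFrom_map (p : GraphHom A B) {q : A.V} {l : List A.E} (h : A.PathFrom q l) :
    B.PathFrom (p.v q) (l.map p.e) := by
  refine ⟨p.isPath_map h.1, ?_⟩
  intro f hf
  cases l with
  | nil => simp at hf
  | cons a l =>
    simp at hf
    subst hf
    rw [p.s_eq, h.2 a (by simp)]

lemma pathTarget_map (p : GraphHom A B) (q : A.V) (l : List A.E) :
    B.pathTarget (p.v q) (l.map p.e) = p.v (A.pathTarget q l) := by
  induction l generalizing q with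
  | nil => rfl
  | cons a l ih =>
    show B.pathTarget (B.t (p.e a)) (l.map p.e) = _
    rw [p.t_eq]
    exact ih (A.t a)

lemma reach_map (p : GraphHom A B) {q w : A.V} (h : A.Reach q w) :
    B.Reach (p.v q) (p.v w) := by
  obtain ⟨l, hl, ht⟩ := h
  exact ⟨l.map p.e, p.pathFrom_map hl, by rw [p.pathTarget_map, ht]⟩

end GraphHom

/-- Two graphs are isomorphic. -/
def RGraph.Iso (A B : RGraph) : Prop := ∃ p : GraphHom A B, p.IsIso

/-- The universal covering morphism from the universal covering tree of `A` to `A`. -/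
def RGraph.uCover (A : RGraph) : GraphHom A.cover A where
  v := fun l => A.pathTarget A.root l.1
  e := fun x => x.1.2
  root_eq := rfl
  s_eq := fun x => x.2
  t_eq := fun x => by
    show A.t x.1.2 = A.pathTarget A.root (x.1.1.1 ++ [x.1.2])
    simp

/-- The morphism induced between universal covering trees by a morphism of graphs. -/
def GraphHom.coverMap {A B : RGraph} (p : GraphHom A B) : GraphHom A.cover B.cover where
  v := fun l => ⟨l.1.map p.e, by have := p.pathFrom_map l.2; rwa [p.root_eq] at this⟩
  e := fun x =>
    ⟨(⟨x.1.1.1.map p.e, by have := p.pathFrom_map x.1.1.2; rwa [p.root_eq] at this⟩,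
      p.e x.1.2), by
        show B.s (p.e x.1.2) = B.pathTarget B.root (x.1.1.1.map p.e)
        rw [p.s_eq, x.2, ← p.root_eq, p.pathTarget_map]⟩
  root_eq := Subtype.ext rfl
  s_eq := fun _ => rfl
  t_eq := fun x => by
    apply Subtype.ext
    simp [RGraph.cover]

/-- `A` is a covering quotient of `T`. -/
def IsCovQuotient (T A : RGraph) : Prop := ∃ p : GraphHom T A, p.IsCovering

/-- `A` is a minimal covering quotient of `T`: a covering quotient with the minimal
number of vertices among all covering quotients of `T`. -/
def IsMinCovQuotient (T A : RGraph) : Prop :=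
  IsCovQuotient T A ∧
    ∀ B : RGraph, IsCovQuotient T B → Cardinal.mk A.V ≤ Cardinal.mk B.V

/-- `T` has finitely many cone types. -/
def FinManyCones (T : RGraph) : Prop :=
  ∃ S : Set T.V, S.Finite ∧ ∀ v : T.V, ∃ w ∈ S, RGraph.Iso (T.subgraph v) (T.subgraph w)

/-- A self-similar tree: a locally finite tree with finitely many cone types. -/
def SelfSimilarTree (T : RGraph) : Prop := T.IsTree ∧ T.LocallyFinite ∧ FinManyCones T

namespace RGraph

/-- The automorphism group of a graph, realized as the group of root-preserving,
adjacency-preserving permutations of the vertex set (for trees this is the same as the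
automorphism group in the sense of graph morphisms, since in a tree an edge is determined
by its endpoints). -/
def autGroup (T : RGraph) : Subgroup (Equiv.Perm T.V) where
  carrier := {g | g T.root = T.root ∧ ∀ v w, T.Adj v w ↔ T.Adj (g v) (g w)}
  one_mem' := ⟨rfl, fun _ _ => Iff.rfl⟩
  mul_mem' := by
    rintro a b ⟨ha1, ha2⟩ ⟨hb1, hb2⟩
    refine ⟨?_, fun v w => ?_⟩
    · show a (b T.root) = T.root
      rw [hb1, ha1]
    · exact (hb2 v w).trans (ha2 (b v) (b w))
  inv_mem' := by
    rintro a ⟨ha1, ha2⟩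
    refine ⟨?_, fun v w => ?_⟩
    · show a.symm T.root = T.root
      rw [Equiv.symm_apply_eq]
      exact ha1.symm
    · have h := ha2 (a⁻¹ v) (a⁻¹ w)
      simpa using h.symm

/-- The subgroup of permutations of the vertices fixing every vertex outside
of the cone at `v`. -/
def fixOutside (T : RGraph) (v : T.V) : Subgroup (Equiv.Perm T.V) where
  carrier := {g | ∀ w, ¬ T.Reach v w → g w = w}
  one_mem' := fun _ _ => rfl
  mul_mem' := by
    intro a b ha hb w hw
    show a (b w) = w
    rw [hb w hw, ha w hw]
  inv_mem' := by
    intro a ha w hw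
    show a.symm w = w
    rw [Equiv.symm_apply_eq]
    exact (ha w hw).symm

/-- The rigid stabilizer of the vertex `v`: automorphisms fixing every vertex
outside the subtree spanned by `v` and its descendants. -/
def rist (T : RGraph) (v : T.V) : Subgroup (Equiv.Perm T.V) :=
  T.autGroup ⊓ T.fixOutside v

/-- The set of vertices at distance `n` from the root. -/
def level (T : RGraph) (n : ℕ) : Set T.V :=
  {v | ∃ l : List T.E, T.PathFrom T.root l ∧ T.pathTarget T.root l = v ∧ l.length = n}

/-- The `n`-th rigid level stabilizer: the subgroup generated by the rigid stabilizers
of the vertices at distance `n` from the root. -/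
def ristLevel (T : RGraph) (n : ℕ) : Subgroup (Equiv.Perm T.V) :=
  ⨆ v ∈ T.level n, T.rist v

/-- The `n`-th rigid level stabilizer, as a subgroup of the automorphism group. -/
def ristIn (T : RGraph) (n : ℕ) : Subgroup ↥T.autGroup :=
  (T.ristLevel n).comap T.autGroup.subtype

end RGraph

/-- A recurrent double edge: a pair of distinct parallel edges such that there is an
oriented loop which contains one of them, or from which their common source can be
reached. -/
def HasRecDoubleEdge (A : RGraph) : Prop :=
  ∃ e₁ e₂ : A.E, e₁ ≠ e₂ ∧ A.s e₁ = A.s e₂ ∧ A.t e₁ = A.t e₂ ∧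
    ((∃ (q : A.V) (l : List A.E),
        A.PathFrom q l ∧ l ≠ [] ∧ A.pathTarget q l = q ∧ (e₁ ∈ l ∨ e₂ ∈ l)) ∨
     (∃ (q : A.V) (l : List A.E),
        A.PathFrom q l ∧ l ≠ [] ∧ A.pathTarget q l = q ∧ A.Reach q (A.s e₁)))

/-- A deterministic finite automaton over the alphabet `A`, with a partial transition
function, a single initial state, and all states accepting. -/
structure PDFA (A : Type) where
  Q : Type
  finQ : Finite Q
  neQ : Nonempty Q
  δ : Q → A → Option Q
  init : Q

namespace PDFA

variable {A : Type} (M : PDFA A)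

/-- Running the automaton from state `q` on a word; `none` if it gets stuck. -/
def run : M.Q → List A → Option M.Q
  | q, [] => some q
  | q, a :: w => (M.δ q a).bind fun q' => run q' w

/-- The regular language accepted by `M`. -/
def Lang : Set (List A) := {w | (M.run M.init w).isSome}

lemma run_append (q : M.Q) (u w : List A) :
    M.run q (u ++ w) = (M.run q u).bind fun q' => M.run q' w := by
  induction u generalizing q with
  | nil => simp [run]
  | cons a u ih =>
    simp only [List.cons_append, run]
    cases M.δ q a with
    | none => simp
    | some q' => simp [ih]

lemma isSome_of_append {q : M.Q} {u w : List A}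
    (h : (M.run q (u ++ w)).isSome) : (M.run q u).isSome := by
  rw [run_append] at h
  cases hu : M.run q u with
  | none => rw [hu] at h; simp at h
  | some q' => simp

/-- The path language tree of `M`: the tree whose vertices are the words of the
language of `M`, with an edge from `w` to `w ++ [a]` whenever both belong to the
language. -/
def pathTree : RGraph where
  V := {w : List A // (M.run M.init w).isSome}
  E := {x : List A × A // (M.run M.init (x.1 ++ [x.2])).isSome}
  s := fun x => ⟨x.1.1, M.isSome_of_append x.2⟩
  t := fun x => ⟨x.1.1 ++ [x.1.2], x.2⟩
  root := ⟨[], by simp [run]⟩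

/-- The underlying rooted directed multigraph of the automaton `M`. -/
def underlying : RGraph where
  V := M.Q
  E := {x : M.Q × A // (M.δ x.1 x.2).isSome}
  s := fun x => x.1.1
  t := fun x => (M.δ x.1.1 x.1.2).get x.2
  root := M.init

/-- `M` is geometrically minimal: it has the minimal number of states among all DFAs
(over arbitrary finite nonempty alphabets) whose path language trees are isomorphic,
as unlabelled rooted trees, to the path language tree of `M`. -/
def GeomMinimal : Prop :=
  ∀ (B : Type), Finite B → Nonempty B → ∀ N : PDFA B,
    RGraph.Iso M.pathTree N.pathTree → Nat.card M.Q ≤ Nat.card N.Q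

/-- The state reached after reading the word `w` of the language. -/
def qstate (w : List A) (h : (M.run M.init w).isSome) : M.Q :=
  (M.run M.init w).get h

/-- The group of admissible permutations at the state `q`: permutations `τ` of the
alphabet fixing the letters outside `Σ(q)` and satisfying `δ(q, τ a) = δ(q, a)`. -/
def SymQ (q : M.Q) : Subgroup (Equiv.Perm A) where
  carrier := {τ | ∀ a, M.δ q (τ a) = M.δ q a ∧ (M.δ q a = none → τ a = a)}
  one_mem' := fun _ => ⟨rfl, fun _ => rfl⟩
  mul_mem' := by
    intro τ₁ τ₂ h1 h2 a
    constructor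
    · show M.δ q (τ₁ (τ₂ a)) = M.δ q a
      rw [(h1 (τ₂ a)).1, (h2 a).1]
    · intro hn
      show τ₁ (τ₂ a) = a
      rw [(h2 a).2 hn, (h1 a).2 hn]
  inv_mem' := by
    intro τ h a
    have h1 := (h (τ.symm a)).1
    rw [Equiv.apply_symm_apply] at h1
    constructor
    · show M.δ q (τ.symm a) = M.δ q a
      exact h1.symm
    · intro hn
      have h2 := (h (τ.symm a)).2 (h1.symm.trans hn)
      rw [Equiv.apply_symm_apply] at h2
      show τ.symm a = a
      exact h2.symm

end PDFA

/-- Extending a portrait to a map on words (the first argument is the accumulated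
prefix): the `i`-th letter of the image word is the image of the `i`-th letter under
the local injection at the prefix of length `i - 1`. -/
def portraitExtend {A : Type} (σ : List A → A → A) : List A → List A → List A
  | _, [] => []
  | pre, a :: w => σ pre a :: portraitExtend σ (pre ++ [a]) w

namespace Stmt6Aux

open RGraph

lemma pathFrom_cons_iff (A : RGraph) (q : A.V) (a : A.E) (m : List A.E) :
    A.PathFrom q (a :: m) ↔ A.s a = q ∧ A.PathFrom (A.t a) m := by
  constructor
  · rintro ⟨hc, hh⟩
    rw [RGraph.IsPath] at hc
    change List.IsChain _ _ at hc
    rw [List.isChain_cons] at hc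
    exact ⟨hh a rfl, hc.2, fun e he => (hc.1 e he).symm⟩
  · rintro ⟨ha, hc, hh⟩
    refine ⟨List.isChain_cons.mpr ⟨fun e he => (hh e he).symm, hc⟩, fun e he => ?_⟩
    simp only [List.head?_cons, Option.mem_def, Option.some.injEq] at he
    subst he; exact ha

lemma pathFrom_append_iff (A : RGraph) (q : A.V) (l l' : List A.E) :
    A.PathFrom q (l ++ l') ↔ A.PathFrom q l ∧ A.PathFrom (A.pathTarget q l) l' := by
  induction l generalizing q with
  | nil => simp [RGraph.pathFrom_nil]
  | cons a l ih =>
    simp only [List.cons_append, pathFrom_cons_iff, RGraph.pathTarget_cons, ih, and_assoc]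

lemma reach_trans {A : RGraph} {q r w : A.V} (h1 : A.Reach q r) (h2 : A.Reach r w) :
    A.Reach q w := by
  obtain ⟨l, hl, ht⟩ := h1
  obtain ⟨l', hl', ht'⟩ := h2
  exact ⟨l ++ l', (pathFrom_append_iff A q l l').mpr ⟨hl, ht ▸ hl'⟩,
    by rw [RGraph.pathTarget_append, ht, ht']⟩

lemma reach_of_mem {A : RGraph} {q : A.V} {m : List A.E} (hm : A.PathFrom q m) :
    ∀ e ∈ m, A.Reach q (A.s e) := by
  induction m generalizing q with
  | nil => intro e he; simp at he
  | cons a m ih =>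
    rw [pathFrom_cons_iff] at hm
    intro e he
    rcases List.mem_cons.mp he with rfl | he
    · exact hm.1 ▸ A.reach_self _
    · exact reach_trans (A.reach_target (hm.1 ▸ A.reach_self q)) (ih hm.2 e he)

def toSub (A : RGraph) (q : A.V) (m : List A.E) (h : ∀ e ∈ m, A.Reach q (A.s e)) :
    List (A.subgraph q).E :=
  m.pmap (fun e he => ⟨e, he⟩) h

lemma toSub_cons (A : RGraph) (q : A.V) (a : A.E) (m : List A.E)
    (h : ∀ e ∈ a :: m, A.Reach q (A.s e)) :
    toSub A q (a :: m) h = @List.cons (A.subgraph q).E ⟨a, h a (by simp)⟩ (toSub A q m (fun e he => h e (by simp [he]))) :=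
  rfl

lemma toSub_pathFrom (A : RGraph) (q : A.V) (m : List A.E) (h : ∀ e ∈ m, A.Reach q (A.s e))
    (v : (A.subgraph q).V) (hm : A.PathFrom v.1 m) :
    (A.subgraph q).PathFrom v (toSub A q m h) := by
  induction m generalizing v with
  | nil => exact (A.subgraph q).pathFrom_nil v
  | cons a m ih =>
    rw [pathFrom_cons_iff] at hm
    exact (pathFrom_cons_iff _ _ _ _).mpr ⟨Subtype.ext hm.1, ih _ ⟨A.t a, A.reach_target (h a (by simp))⟩ hm.2⟩

lemma toSub_target (A : RGraph) (q : A.V) (m : List A.E) (h : ∀ e ∈ m, A.Reach q (A.s e))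
    (v : (A.subgraph q).V) :
    ((A.subgraph q).pathTarget v (toSub A q m h)).1 = A.pathTarget v.1 m := by
  induction m generalizing v with
  | nil => rfl
  | cons a m ih =>
    show ((A.subgraph q).pathTarget ((A.subgraph q).t ⟨a, h a (by simp)⟩)
      (toSub A q m (fun e he => h e (by simp [he])))).1 = A.pathTarget (A.t a) m
    exact ih _ _

lemma ofSub_pathFrom (A : RGraph) (q : A.V) (l : List (A.subgraph q).E)
    (v : (A.subgraph q).V) (hl : (A.subgraph q).PathFrom v l) :
    A.PathFrom v.1 (l.map Subtype.val) := by
  induction l generalizing v with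
  | nil => exact A.pathFrom_nil _
  | cons a l ih =>
    rw [pathFrom_cons_iff] at hl
    exact (pathFrom_cons_iff _ _ _ _).mpr ⟨congrArg Subtype.val hl.1, ih _ hl.2⟩

lemma ofSub_target (A : RGraph) (q : A.V) (l : List (A.subgraph q).E)
    (v : (A.subgraph q).V) :
    A.pathTarget v.1 (l.map Subtype.val) = ((A.subgraph q).pathTarget v l).1 := by
  induction l generalizing v with
  | nil => rfl
  | cons a l ih =>
    exact ih ((A.subgraph q).t a)

lemma cover_shape (A : RGraph) (γ : A.cover.V) (L : List A.cover.E)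
    (h : A.cover.PathFrom γ L) :
    ∃ m : List A.E, A.PathFrom (A.uCover.v γ) m ∧ (A.cover.pathTarget γ L).1 = γ.1 ++ m := by
  induction L generalizing γ with
  | nil => exact ⟨[], A.pathFrom_nil _, (List.append_nil _).symm⟩
  | cons E L ih =>
    rw [pathFrom_cons_iff] at h
    obtain ⟨hs, hL⟩ := h
    obtain ⟨m, hm1, hm2⟩ := ih (A.cover.t E) hL
    have htE : A.uCover.v (A.cover.t E) = A.t E.1.2 := by
      show A.pathTarget A.root (E.1.1.1 ++ [E.1.2]) = _
      simp
    rw [htE] at hm1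
    have hsE : E.1.1 = γ := hs
    refine ⟨E.1.2 :: m, (pathFrom_cons_iff _ _ _ _).mpr ⟨?_, hm1⟩, ?_⟩
    · show A.s E.1.2 = A.pathTarget A.root γ.1
      rw [E.2, hsE]
    · rw [RGraph.pathTarget_cons, hm2]
      show (E.1.1.1 ++ [E.1.2]) ++ m = γ.1 ++ E.1.2 :: m
      rw [hsE]
      simp

lemma reach_cover_of (A : RGraph) (γ : A.cover.V) (m : List A.E) :
    A.PathFrom (A.uCover.v γ) m → ∀ δ : A.cover.V, δ.1 = γ.1 ++ m → A.cover.Reach γ δ := by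
  induction m using List.reverseRecOn with
  | nil =>
    intro _ δ hδ
    have : δ = γ := Subtype.ext (by simpa using hδ)
    rw [this]; exact A.cover.reach_self γ
  | append_singleton m e ih =>
    intro hm δ hδ
    rw [pathFrom_append_iff] at hm
    have hroot : A.PathFrom A.root (γ.1 ++ m) :=
      (pathFrom_append_iff A _ _ _).mpr ⟨γ.2, hm.1⟩
    have hse : A.s e = A.pathTarget A.root (γ.1 ++ m) := by
      rw [RGraph.pathTarget_append]
      exact ((pathFrom_cons_iff _ _ _ _).mp hm.2).1
    set E : A.cover.E := ⟨(⟨γ.1 ++ m, hroot⟩, e), hse⟩ with hE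
    have hreach : A.cover.Reach γ (A.cover.s E) := ih hm.1 ⟨γ.1 ++ m, hroot⟩ rfl
    have ht := A.cover.reach_target hreach
    have : A.cover.t E = δ := Subtype.ext (by rw [hδ]; exact List.append_assoc γ.1 m [e])
    rwa [this] at ht

lemma cover_sub_spec (A : RGraph) (γ : A.cover.V) (x : A.cover.V)
    (hx : A.cover.Reach γ x) :
    x.1 = γ.1 ++ x.1.drop γ.1.length ∧ A.PathFrom (A.uCover.v γ) (x.1.drop γ.1.length) := by
  obtain ⟨L, hL, htL⟩ := hx
  obtain ⟨m, hm1, hm2⟩ := cover_shape A γ L hL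
  rw [htL] at hm2
  have hd : x.1.drop γ.1.length = m := by rw [hm2, List.drop_left]
  rw [hd]
  exact ⟨hm2, hm1⟩

section Construction

variable (A : RGraph) (γ γ' : A.cover.V)
  (g₀ : GraphHom (A.subgraph (A.uCover.v γ)) (A.subgraph (A.uCover.v γ')))

def ext (x : (A.cover.subgraph γ).V) : List A.E := x.1.1.drop γ.1.length

lemma ext_spec (x : (A.cover.subgraph γ).V) :
    x.1.1 = γ.1 ++ ext A γ x ∧ A.PathFrom (A.uCover.v γ) (ext A γ x) :=
  cover_sub_spec A γ x.1 x.2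

lemma ext_reach (x : (A.cover.subgraph γ).V) :
    ∀ e ∈ ext A γ x, A.Reach (A.uCover.v γ) (A.s e) :=
  reach_of_mem (ext_spec A γ x).2

lemma ext_eq (x : (A.cover.subgraph γ).V) (m : List A.E) (hx : x.1.1 = γ.1 ++ m) :
    ext A γ x = m := by
  rw [ext, hx, List.drop_left]

def mapL (m : List A.E) (h : ∀ e ∈ m, A.Reach (A.uCover.v γ) (A.s e)) : List A.E :=
  m.pmap (fun e he => (g₀.e ⟨e, he⟩).1) h

lemma mapL_congr (m m' : List A.E) (h : ∀ e ∈ m, A.Reach (A.uCover.v γ) (A.s e))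
    (h' : ∀ e ∈ m', A.Reach (A.uCover.v γ) (A.s e)) (hmm : m = m') :
    mapL A γ γ' g₀ m h = mapL A γ γ' g₀ m' h' := by subst hmm; rfl

lemma mapL_eq (m : List A.E) (h : ∀ e ∈ m, A.Reach (A.uCover.v γ) (A.s e)) :
    mapL A γ γ' g₀ m h
      = ((toSub A (A.uCover.v γ) m h).map g₀.e).map Subtype.val := by
  unfold mapL toSub
  exact ((List.map_map ..).trans (List.map_pmap _)).symm

lemma mapL_concat (m : List A.E) (e : A.E)
    (h : ∀ f ∈ m ++ [e], A.Reach (A.uCover.v γ) (A.s f)) :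
    mapL A γ γ' g₀ (m ++ [e]) h
      = mapL A γ γ' g₀ m (fun f hf => h f (by simp [hf]))
        ++ [(g₀.e ⟨e, h e (by simp)⟩).1] := by
  simp [mapL, List.pmap_append]

lemma mapL_pathFrom (m : List A.E) (h : ∀ e ∈ m, A.Reach (A.uCover.v γ) (A.s e))
    (hm : A.PathFrom (A.uCover.v γ) m) :
    A.PathFrom (A.uCover.v γ') (mapL A γ γ' g₀ m h) := by
  rw [mapL_eq]
  have h1 := toSub_pathFrom A (A.uCover.v γ) m h (A.subgraph (A.uCover.v γ)).root hm
  have h2 := g₀.pathFrom_map h1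
  rw [g₀.root_eq] at h2
  exact ofSub_pathFrom A _ _ _ h2

lemma mapL_target (m : List A.E) (h : ∀ e ∈ m, A.Reach (A.uCover.v γ) (A.s e))
    (hh : A.Reach (A.uCover.v γ) (A.pathTarget (A.uCover.v γ) m)) :
    A.pathTarget (A.uCover.v γ') (mapL A γ γ' g₀ m h)
      = (g₀.v ⟨A.pathTarget (A.uCover.v γ) m, hh⟩).1 := by
  rw [mapL_eq]
  have e1 : A.pathTarget (A.uCover.v γ') (((toSub A (A.uCover.v γ) m h).map g₀.e).map Subtype.val)
      = ((A.subgraph (A.uCover.v γ')).pathTarget (A.subgraph (A.uCover.v γ')).root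
          ((toSub A (A.uCover.v γ) m h).map g₀.e)).1 :=
    ofSub_target A (A.uCover.v γ') ((toSub A (A.uCover.v γ) m h).map g₀.e)
      (A.subgraph (A.uCover.v γ')).root
  rw [e1, ← g₀.root_eq, g₀.pathTarget_map]
  have h4 : ((A.subgraph (A.uCover.v γ)).pathTarget (A.subgraph (A.uCover.v γ)).root
      (toSub A (A.uCover.v γ) m h))
      = (⟨A.pathTarget (A.uCover.v γ) m, hh⟩ : (A.subgraph (A.uCover.v γ)).V) :=
    Subtype.ext (toSub_target A _ m h _)
  rw [h4]

def liftList (x : (A.cover.subgraph γ).V) : List A.E :=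
  mapL A γ γ' g₀ (ext A γ x) (ext_reach A γ x)

lemma liftList_pathFrom (x : (A.cover.subgraph γ).V) :
    A.PathFrom (A.uCover.v γ') (liftList A γ γ' g₀ x) :=
  mapL_pathFrom A γ γ' g₀ _ _ (ext_spec A γ x).2

def liftCoverV (x : (A.cover.subgraph γ).V) : A.cover.V :=
  ⟨γ'.1 ++ liftList A γ γ' g₀ x,
   (pathFrom_append_iff A _ _ _).mpr ⟨γ'.2, liftList_pathFrom A γ γ' g₀ x⟩⟩

def liftV (x : (A.cover.subgraph γ).V) : (A.cover.subgraph γ').V :=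
  ⟨liftCoverV A γ γ' g₀ x,
   reach_cover_of A γ' _ (liftList_pathFrom A γ γ' g₀ x) _ rfl⟩

def src (x : (A.cover.subgraph γ).E) : (A.cover.subgraph γ).V := ⟨x.1.1.1, x.2⟩

lemma vert_target (x : (A.cover.subgraph γ).V) :
    A.pathTarget A.root x.1.1 = A.pathTarget (A.uCover.v γ) (ext A γ x) := by
  conv_lhs => rw [(ext_spec A γ x).1]
  rw [RGraph.pathTarget_append]
  rfl

lemma edge_src_reach (x : (A.cover.subgraph γ).E) :
    A.Reach (A.uCover.v γ) (A.s x.1.1.2) :=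
  ⟨ext A γ (src A γ x), (ext_spec A γ (src A γ x)).2,
    (x.1.2.trans (vert_target A γ (src A γ x))).symm⟩

def edgeImg (x : (A.cover.subgraph γ).E) : A.E :=
  (g₀.e ⟨x.1.1.2, edge_src_reach A γ x⟩).1

lemma edgeImg_s (x : (A.cover.subgraph γ).E) :
    A.s (edgeImg A γ γ' g₀ x)
      = A.pathTarget A.root (liftCoverV A γ γ' g₀ (src A γ x)).1 := by
  have hr : A.Reach (A.uCover.v γ)
      (A.pathTarget (A.uCover.v γ) (ext A γ (src A γ x))) :=
    ⟨_, (ext_spec A γ (src A γ x)).2, rfl⟩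
  have h2 : A.pathTarget A.root (liftCoverV A γ γ' g₀ (src A γ x)).1
      = (g₀.v ⟨A.pathTarget (A.uCover.v γ) (ext A γ (src A γ x)), hr⟩).1 := by
    show A.pathTarget A.root (γ'.1 ++ liftList A γ γ' g₀ (src A γ x)) = _
    rw [RGraph.pathTarget_append]
    exact mapL_target A γ γ' g₀ _ _ hr
  rw [h2]
  have h3 := congrArg Subtype.val (g₀.s_eq ⟨x.1.1.2, edge_src_reach A γ x⟩)
  refine h3.trans ?_
  have h4 : ((A.subgraph (A.uCover.v γ)).s ⟨x.1.1.2, edge_src_reach A γ x⟩)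
      = (⟨A.pathTarget (A.uCover.v γ) (ext A γ (src A γ x)), hr⟩
          : (A.subgraph (A.uCover.v γ)).V) :=
    Subtype.ext (x.1.2.trans (vert_target A γ (src A γ x)))
  exact congrArg (fun z => (g₀.v z).1) h4

def liftE (x : (A.cover.subgraph γ).E) : (A.cover.subgraph γ').E :=
  ⟨⟨(liftCoverV A γ γ' g₀ (src A γ x), edgeImg A γ γ' g₀ x), edgeImg_s A γ γ' g₀ x⟩,
   (liftV A γ γ' g₀ (src A γ x)).2⟩

def lift : GraphHom (A.cover.subgraph γ) (A.cover.subgraph γ') where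
  v := liftV A γ γ' g₀
  e := liftE A γ γ' g₀
  root_eq := by
    apply Subtype.ext
    apply Subtype.ext
    show γ'.1 ++ liftList A γ γ' g₀ (A.cover.subgraph γ).root = γ'.1
    have hnil : liftList A γ γ' g₀ (A.cover.subgraph γ).root = [] := by
      apply List.eq_nil_of_length_eq_zero
      show (List.pmap _ (ext A γ (A.cover.subgraph γ).root) _).length = 0
      rw [List.length_pmap]
      show (γ.1.drop γ.1.length).length = 0
      rw [List.drop_length]
      rfl
    rw [hnil, List.append_nil]
  s_eq := fun x => Subtype.ext rfl
  t_eq := fun x => by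
    apply Subtype.ext
    apply Subtype.ext
    show (liftCoverV A γ γ' g₀ (src A γ x)).1 ++ [edgeImg A γ γ' g₀ x]
        = γ'.1 ++ liftList A γ γ' g₀ ((A.cover.subgraph γ).t x)
    have hext : ext A γ ((A.cover.subgraph γ).t x) = ext A γ (src A γ x) ++ [x.1.1.2] := by
      apply ext_eq
      show x.1.1.1.1 ++ [x.1.1.2] = γ.1 ++ (ext A γ (src A γ x) ++ [x.1.1.2])
      conv_lhs => rw [show x.1.1.1.1 = γ.1 ++ ext A γ (src A γ x) from (ext_spec A γ (src A γ x)).1]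
      rw [List.append_assoc]
    have pf : ∀ e ∈ ext A γ (src A γ x) ++ [x.1.1.2], A.Reach (A.uCover.v γ) (A.s e) := by
      rw [← hext]; exact ext_reach A γ _
    have h2 : liftList A γ γ' g₀ ((A.cover.subgraph γ).t x)
        = mapL A γ γ' g₀ (ext A γ (src A γ x) ++ [x.1.1.2]) pf :=
      mapL_congr A γ γ' g₀ _ _ _ _ hext
    rw [h2, mapL_concat, ← List.append_assoc]
    rfl

lemma lift_comm_v (x : (A.cover.subgraph γ).V) :
    A.uCover.v ((lift A γ γ' g₀).v x).1
      = (g₀.v ⟨A.uCover.v x.1, A.uCover.reach_map x.2⟩).1 := by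
  have hr : A.Reach (A.uCover.v γ) (A.pathTarget (A.uCover.v γ) (ext A γ x)) :=
    ⟨_, (ext_spec A γ x).2, rfl⟩
  have h1 : A.uCover.v ((lift A γ γ' g₀).v x).1
      = (g₀.v ⟨A.pathTarget (A.uCover.v γ) (ext A γ x), hr⟩).1 := by
    show A.pathTarget A.root (γ'.1 ++ liftList A γ γ' g₀ x) = _
    rw [RGraph.pathTarget_append]
    exact mapL_target A γ γ' g₀ _ _ hr
  rw [h1]
  have h4 : (⟨A.pathTarget (A.uCover.v γ) (ext A γ x), hr⟩ : (A.subgraph (A.uCover.v γ)).V)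
      = ⟨A.uCover.v x.1, A.uCover.reach_map x.2⟩ :=
    Subtype.ext (vert_target A γ x).symm
  rw [h4]

lemma lift_comm_e (x : (A.cover.subgraph γ).E)
    (hp : A.Reach (A.uCover.v γ) (A.s (A.uCover.e x.1))) :
    A.uCover.e ((lift A γ γ' g₀).e x).1 = (g₀.e ⟨A.uCover.e x.1, hp⟩).1 := rfl

end Construction

lemma hom_ext {A B : RGraph} {p q : GraphHom A B} (hv : p.v = q.v) (he : p.e = q.e) :
    p = q := by
  cases p; cases q; cases hv; cases he; rfl

lemma exists_inv {A B : RGraph} (p : GraphHom A B) (h : p.IsIso) :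
    ∃ p' : GraphHom B A, (∀ a, p'.v (p.v a) = a) ∧ (∀ b, p.v (p'.v b) = b) ∧
      (∀ e, p'.e (p.e e) = e) ∧ (∀ f, p.e (p'.e f) = f) := by
  have hv := h.1
  have he := h.2
  let ev := Equiv.ofBijective p.v hv
  let ee := Equiv.ofBijective p.e he
  have hre : ev.symm B.root = A.root := by
    rw [Equiv.symm_apply_eq]; exact p.root_eq.symm
  have hs : ∀ f, A.s (ee.symm f) = ev.symm (B.s f) := by
    intro f
    apply hv.injective
    calc p.v (A.s (ee.symm f)) = B.s (p.e (ee.symm f)) := (p.s_eq _).symm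
      _ = B.s f := congrArg B.s (ee.apply_symm_apply f)
      _ = p.v (ev.symm (B.s f)) := (ev.apply_symm_apply (B.s f)).symm
  have ht : ∀ f, A.t (ee.symm f) = ev.symm (B.t f) := by
    intro f
    apply hv.injective
    calc p.v (A.t (ee.symm f)) = B.t (p.e (ee.symm f)) := (p.t_eq _).symm
      _ = B.t f := congrArg B.t (ee.apply_symm_apply f)
      _ = p.v (ev.symm (B.t f)) := (ev.apply_symm_apply (B.t f)).symm
  exact ⟨⟨fun b => ev.symm b, fun f => ee.symm f, hre, hs, ht⟩,
    fun a => ev.symm_apply_apply a, fun b => ev.apply_symm_apply b,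
    fun e => ee.symm_apply_apply e, fun f => ee.apply_symm_apply f⟩

lemma toSub_ofSub (A : RGraph) (q : A.V) (l : List (A.subgraph q).E) :
    ∀ h, toSub A q (l.map Subtype.val) h = l := by
  induction l with
  | nil => intro h; rfl
  | cons a l ih =>
    intro h
    exact congrArg₂ List.cons (Subtype.ext rfl) (ih _)

lemma map_val_toSub (A : RGraph) (q : A.V) (m : List A.E)
    (h : ∀ e ∈ m, A.Reach q (A.s e)) :
    (toSub A q m h).map Subtype.val = m := by
  induction m with
  | nil => rfl
  | cons a m ih => exact congrArg (a :: ·) (ih _)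

section Inverse

variable (A : RGraph) (γ γ' : A.cover.V)
  (g₀ : GraphHom (A.subgraph (A.uCover.v γ)) (A.subgraph (A.uCover.v γ')))
  (g₀' : GraphHom (A.subgraph (A.uCover.v γ')) (A.subgraph (A.uCover.v γ)))

lemma mapL_inv (hinv : ∀ X, g₀'.e (g₀.e X) = X) (m : List A.E)
    (h : ∀ e ∈ m, A.Reach (A.uCover.v γ) (A.s e))
    (h' : ∀ e ∈ mapL A γ γ' g₀ m h, A.Reach (A.uCover.v γ') (A.s e)) :
    mapL A γ' γ g₀' (mapL A γ γ' g₀ m h) h' = m := by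
  have h2 : ∀ e ∈ ((toSub A (A.uCover.v γ) m h).map g₀.e).map Subtype.val,
      A.Reach (A.uCover.v γ') (A.s e) := by
    rw [← mapL_eq]; exact h'
  have h3 : ((toSub A (A.uCover.v γ) m h).map g₀.e).map g₀'.e
      = toSub A (A.uCover.v γ) m h := by
    rw [List.map_map, show g₀'.e ∘ g₀.e = id from funext hinv, List.map_id]
  rw [mapL_congr A γ' γ g₀' _ _ h' h2 (mapL_eq A γ γ' g₀ m h), mapL_eq,
    toSub_ofSub, h3, map_val_toSub]

lemma lift_inv_v (hinv : ∀ X, g₀'.e (g₀.e X) = X) (x : (A.cover.subgraph γ).V) :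
    (lift A γ' γ g₀').v ((lift A γ γ' g₀).v x) = x := by
  apply Subtype.ext
  apply Subtype.ext
  show γ.1 ++ liftList A γ' γ g₀' (liftV A γ γ' g₀ x) = x.1.1
  have hex : ext A γ' (liftV A γ γ' g₀ x) = liftList A γ γ' g₀ x :=
    ext_eq A γ' _ _ rfl
  have hpf : ∀ e ∈ liftList A γ γ' g₀ x, A.Reach (A.uCover.v γ') (A.s e) := by
    rw [← hex]; exact ext_reach A γ' _
  have h1 : liftList A γ' γ g₀' (liftV A γ γ' g₀ x)
      = mapL A γ' γ g₀' (liftList A γ γ' g₀ x) hpf :=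
    mapL_congr A γ' γ g₀' _ _ _ _ hex
  rw [h1]
  have h2 : mapL A γ' γ g₀' (liftList A γ γ' g₀ x) hpf = ext A γ x :=
    mapL_inv A γ γ' g₀ g₀' hinv (ext A γ x) (ext_reach A γ x) hpf
  rw [h2]
  exact (ext_spec A γ x).1.symm

lemma lift_inv_e (hinv : ∀ X, g₀'.e (g₀.e X) = X) (x : (A.cover.subgraph γ).E) :
    (lift A γ' γ g₀').e ((lift A γ γ' g₀).e x) = x := by
  apply Subtype.ext
  apply Subtype.ext
  refine Prod.ext ?_ ?_
  · show liftCoverV A γ' γ g₀' (src A γ' (liftE A γ γ' g₀ x)) = x.1.1.1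
    calc liftCoverV A γ' γ g₀' (src A γ' (liftE A γ γ' g₀ x))
        = ((lift A γ' γ g₀').v ((lift A γ γ' g₀).v (src A γ x))).1 := rfl
      _ = (src A γ x).1 := congrArg Subtype.val (lift_inv_v A γ γ' g₀ g₀' hinv (src A γ x))
  · show edgeImg A γ' γ g₀' (liftE A γ γ' g₀ x) = x.1.1.2
    have h2 : (⟨edgeImg A γ γ' g₀ x, edge_src_reach A γ' (liftE A γ γ' g₀ x)⟩ :
        (A.subgraph (A.uCover.v γ')).E) = g₀.e ⟨x.1.1.2, edge_src_reach A γ x⟩ :=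
      Subtype.ext rfl
    show (g₀'.e ⟨edgeImg A γ γ' g₀ x, edge_src_reach A γ' (liftE A γ γ' g₀ x)⟩).1 = x.1.1.2
    rw [h2]
    exact congrArg Subtype.val (hinv _)

end Inverse

lemma lift_isIso (A : RGraph) (γ γ' : A.cover.V)
    (g₀ : GraphHom (A.subgraph (A.uCover.v γ)) (A.subgraph (A.uCover.v γ')))
    (hg₀ : g₀.IsIso) : (lift A γ γ' g₀).IsIso := by
  obtain ⟨g₀', hinv1, hinv2, hinv3, hinv4⟩ := exists_inv g₀ hg₀
  constructor
  · exact Function.bijective_iff_has_inverse.mpr ⟨(lift A γ' γ g₀').v,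
      fun x => lift_inv_v A γ γ' g₀ g₀' hinv3 x,
      fun y => lift_inv_v A γ' γ g₀' g₀ hinv4 y⟩
  · exact Function.bijective_iff_has_inverse.mpr ⟨(lift A γ' γ g₀').e,
      fun x => lift_inv_e A γ γ' g₀ g₀' hinv3 x,
      fun y => lift_inv_e A γ' γ g₀' g₀ hinv4 y⟩

lemma lift_unique (A : RGraph) (γ γ' : A.cover.V)
    (g₀ : GraphHom (A.subgraph (A.uCover.v γ)) (A.subgraph (A.uCover.v γ')))
    (g : GraphHom (A.cover.subgraph γ) (A.cover.subgraph γ'))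
    (hcomm : ∀ x : (A.cover.subgraph γ).E,
      A.uCover.e (g.e x).1 = (g₀.e ⟨A.uCover.e x.1, edge_src_reach A γ x⟩).1) :
    g = lift A γ γ' g₀ := by
  have hnilcase : ∀ x : (A.cover.subgraph γ).V, ext A γ x = [] →
      g.v x = (lift A γ γ' g₀).v x := by
    intro x hnil
    have hxr : x = (A.cover.subgraph γ).root := by
      apply Subtype.ext; apply Subtype.ext
      show x.1.1 = γ.1
      rw [(ext_spec A γ x).1, hnil, List.append_nil]
    rw [hxr, g.root_eq, (lift A γ γ' g₀).root_eq]
  have hv : ∀ n (x : (A.cover.subgraph γ).V), (ext A γ x).length ≤ n →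
      g.v x = (lift A γ γ' g₀).v x := by
    intro n
    induction n with
    | zero =>
      intro x hx
      exact hnilcase x (List.eq_nil_of_length_eq_zero (Nat.le_zero.mp hx))
    | succ n ih =>
      intro x hx
      rcases List.eq_nil_or_concat (ext A γ x) with hnil | ⟨m, e, hme⟩
      · exact hnilcase x hnil
      · rw [List.concat_eq_append] at hme
        have hxspec := ext_spec A γ x
        have hPm : A.PathFrom (A.uCover.v γ) (m ++ [e]) := hme ▸ hxspec.2
        rw [pathFrom_append_iff] at hPm
        have hse : A.s e = A.pathTarget (A.uCover.v γ) m :=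
          ((pathFrom_cons_iff _ _ _ _).mp hPm.2).1
        have hrootm : A.PathFrom A.root (γ.1 ++ m) :=
          (pathFrom_append_iff A _ _ _).mpr ⟨γ.2, hPm.1⟩
        have hsecover : A.s e = A.pathTarget A.root (γ.1 ++ m) := by
          rw [RGraph.pathTarget_append]; exact hse
        have hyreach : A.cover.Reach γ (⟨γ.1 ++ m, hrootm⟩ : A.cover.V) :=
          reach_cover_of A γ m hPm.1 ⟨γ.1 ++ m, hrootm⟩ rfl
        set y : (A.cover.subgraph γ).V := ⟨⟨γ.1 ++ m, hrootm⟩, hyreach⟩ with hy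
        set E : (A.cover.subgraph γ).E :=
          ⟨⟨(⟨γ.1 ++ m, hrootm⟩, e), hsecover⟩, hyreach⟩ with hE
        have hty : (A.cover.subgraph γ).t E = x := by
          apply Subtype.ext; apply Subtype.ext
          show (γ.1 ++ m) ++ [e] = x.1.1
          rw [hxspec.1, hme, List.append_assoc]
        have hexty : ext A γ y = m := ext_eq A γ y m rfl
        have ihy : g.v y = (lift A γ γ' g₀).v y := by
          apply ih
          rw [hexty]
          have hlen := hx
          rw [hme] at hlen
          simp at hlen
          omega
        have heE : g.e E = (lift A γ γ' g₀).e E := by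
          apply Subtype.ext
          apply Subtype.ext
          refine Prod.ext ?_ ?_
          · calc (show A.cover.V from (g.e E).1.1.1)
                = (g.v ((A.cover.subgraph γ).s E)).1 := congrArg Subtype.val (g.s_eq E)
              _ = (g.v y).1 := rfl
              _ = ((lift A γ γ' g₀).v y).1 := by rw [ihy]
              _ = ((lift A γ γ' g₀).v ((A.cover.subgraph γ).s E)).1 := rfl
              _ = (show A.cover.V from ((lift A γ γ' g₀).e E).1.1.1) :=
                  (congrArg Subtype.val ((lift A γ γ' g₀).s_eq E)).symm
          · exact (hcomm E).trans (lift_comm_e A γ γ' g₀ E _).symm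
        rw [← hty, ← g.t_eq, ← (lift A γ γ' g₀).t_eq, heE]
  have hvv : ∀ x, g.v x = (lift A γ γ' g₀).v x := fun x => hv (ext A γ x).length x le_rfl
  have hee : ∀ x, g.e x = (lift A γ γ' g₀).e x := by
    intro x
    apply Subtype.ext
    apply Subtype.ext
    refine Prod.ext ?_ ?_
    · calc (show A.cover.V from (g.e x).1.1.1)
          = (g.v ((A.cover.subgraph γ).s x)).1 := congrArg Subtype.val (g.s_eq x)
        _ = ((lift A γ γ' g₀).v ((A.cover.subgraph γ).s x)).1 := by rw [hvv]
        _ = (show A.cover.V from ((lift A γ γ' g₀).e x).1.1.1) :=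
            (congrArg Subtype.val ((lift A γ γ' g₀).s_eq x)).symm
    · exact (hcomm x).trans (lift_comm_e A γ γ' g₀ x _).symm
  exact hom_ext (funext hvv) (funext hee)

end Stmt6Aux

/-- Lifting isomorphisms of cones. Let `A` be connected with
universal covering `π : T → A`, let `γ, γ'` be vertices of `T = T_A` and put
`q = π₀(γ)`, `q' = π₀(γ')`. Every rooted isomorphism `g₀ : A_q → A_{q'}` lifts to a
unique rooted isomorphism `g : T_γ → T_{γ'}` with `π ∘ g = g₀ ∘ π`. -/
theorem stmt6 (A : RGraph) (hA : A.Connected) (γ γ' : A.cover.V)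
    (g₀ : GraphHom (A.subgraph (A.uCover.v γ)) (A.subgraph (A.uCover.v γ')))
    (hg₀ : g₀.IsIso) :
    ∃! g : GraphHom (A.cover.subgraph γ) (A.cover.subgraph γ'),
      g.IsIso ∧
      (∀ x : (A.cover.subgraph γ).V,
        A.uCover.v (g.v x).1 = (g₀.v ⟨A.uCover.v x.1, A.uCover.reach_map x.2⟩).1) ∧
      (∀ x : (A.cover.subgraph γ).E,
        A.uCover.e (g.e x).1 = (g₀.e ⟨A.uCover.e x.1, by
          rw [A.uCover.s_eq]; exact A.uCover.reach_map x.2⟩).1) := by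
  refine ⟨Stmt6Aux.lift A γ γ' g₀,
    ⟨Stmt6Aux.lift_isIso A γ γ' g₀ hg₀,
     Stmt6Aux.lift_comm_v A γ γ' g₀,
     fun x => Stmt6Aux.lift_comm_e A γ γ' g₀ x _⟩, ?_⟩
  rintro g ⟨-, -, hcomm⟩
  exact Stmt6Aux.lift_unique A γ γ' g₀ g (fun x => hcomm x)
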